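/- arXiv:2507.08714 — 3 statements merged into one kernel-verified Lean document; each statement's English description precedes it below -/
import Mathlib

section
/- For g ≥ 2, a seed α ∈ 𝒜_g, integers L ≥ 0, j ≥ 0, a real x with 1 ≤ x ≤ g^L, and β ∈ ℝ, we have |Σ_{0≤n<x} e(f_L^{[j]}(n) − βn)| ≤ (g−1) Σ_{0≤λ≤ log⌈x⌉/log g} |Σ_{0≤n<g^λ} e(f_λ^{[j]}(n) − βn)|, where e(t) = exp(2πit). -/
/-- The `i`-th base-`g` digit of `n`. -/
noncomputable def eps (g n i : ℕ) : ℕ := n / g ^ i % g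

/-- The weakly digital function `f_λ^{[j]}` generated by the seed `α`. -/
noncomputable def wdf (g : ℕ) (α : ℕ → ℕ → ℝ) (lam j n : ℕ) : ℝ :=
  ∑ i ∈ Finset.range lam, α (i + j) (eps g n i)

/-- `e(t) = exp(2πit)`. -/
noncomputable def eC (t : ℝ) : ℂ := Complex.exp (2 * (Real.pi : ℂ) * Complex.I * (t : ℂ))

lemma eC_add (s t : ℝ) : eC (s + t) = eC s * eC t := by
  simp only [eC, ← Complex.exp_add]; ring_nf; push_cast; ring_nf

lemma abs_eC (t : ℝ) : ‖eC t‖ = 1 := by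
  simp [eC, Complex.norm_exp]

lemma div_base {g : ℕ} (hg : 0 < g) (m r : ℕ) (hr : r < g) : (m * g + r) / g = m := by
  rw [Nat.mul_comm m g, Nat.mul_add_div hg, Nat.div_eq_of_lt hr]
  omega
lemma eps_zero {g : ℕ} (hg : 0 < g) (m r : ℕ) (hr : r < g) : eps g (m * g + r) 0 = r := by
  simp only [eps, pow_zero, Nat.div_one, Nat.add_comm, Nat.add_mul_mod_self_right,
    Nat.mod_eq_of_lt hr]
lemma eps_succ {g : ℕ} (hg : 0 < g) (m r i : ℕ) (hr : r < g) :
    eps g (m * g + r) (i + 1) = eps g m i := by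
  unfold eps
  rw [pow_succ', ← Nat.div_div_eq_div_mul, div_base hg m r hr]
lemma wdf_split {g : ℕ} (hg : 0 < g) (α : ℕ → ℕ → ℝ) (L j m r : ℕ) (hr : r < g) :
    wdf g α (L + 1) j (m * g + r) = α j r + wdf g α L (j + 1) m := by
  unfold wdf
  rw [Finset.sum_range_succ']
  rw [eps_zero hg m r hr, Nat.zero_add, add_comm]
  congr 1
  refine Finset.sum_congr rfl fun i _ => ?_
  rw [eps_succ hg m r i hr]
  ring_nf

lemma term_split {g : ℕ} (hg : 0 < g) (α : ℕ → ℕ → ℝ) (L j m r : ℕ) (β : ℝ) (hr : r < g) :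
    eC (wdf g α (L + 1) j (m * g + r) - β * (m * g + r : ℕ)) =
      eC (α j r - β * r) * eC (wdf g α L (j + 1) m - (β * g) * m) := by
  rw [← eC_add, wdf_split hg α L j m r hr]
  congr 1
  push_cast
  ring

lemma sum_split {g : ℕ} (hg : 0 < g) (α : ℕ → ℕ → ℝ) (L j : ℕ) (β : ℝ) (M : ℕ) :
    ∑ n ∈ Finset.range (M * g), eC (wdf g α (L + 1) j n - β * n) =
      (∑ r ∈ Finset.range g, eC (α j r - β * r)) *
        ∑ m ∈ Finset.range M, eC (wdf g α L (j + 1) m - (β * g) * m) := by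
  induction M with
  | zero => simp
  | succ M ih =>
    rw [Nat.succ_mul, Finset.sum_range_add, ih, Finset.sum_range_succ]
    have : ∀ r ∈ Finset.range g, eC (wdf g α (L + 1) j (M * g + r) - β * (M * g + r : ℕ)) =
        eC (α j r - β * r) * eC (wdf g α L (j + 1) M - (β * g) * M) := fun r hr =>
      term_split hg α L j M r β (Finset.mem_range.mp hr)
    rw [Finset.sum_congr rfl this, ← Finset.sum_mul]
    ring

lemma main_bound {g : ℕ} (hg : 2 ≤ g) (α : ℕ → ℕ → ℝ) :
    ∀ L j (β : ℝ) N, N ≤ g ^ L →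
      ‖∑ n ∈ Finset.range N, eC (wdf g α L j n - β * n)‖ ≤
        ∑ lam ∈ Finset.range (L + 1), (eps g N lam : ℝ) *
          ‖∑ n ∈ Finset.range (g ^ lam), eC (wdf g α lam j n - β * n)‖ := by
  have hg0 : 0 < g := by omega
  intro L
  induction L with
  | zero =>
    intro j β N hN
    rw [pow_zero] at hN
    interval_cases N
    · simp [eps]
    · simp [eps, wdf, Nat.mod_eq_of_lt (show 1 < g by omega), abs_eC]
  | succ L ih =>
    intro j β N hN
    set q := N / g with hq
    set s := N % g with hs
    have hNqs : N = q * g + s := by rw [hq, hs]; exact (Nat.div_add_mod' N g).symm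
    have hqL : q ≤ g ^ L := by
      rw [hq]
      have : N / g ≤ g ^ (L + 1) / g := Nat.div_le_div_right hN
      rwa [pow_succ, Nat.mul_div_cancel _ hg0] at this
    -- decompose the sum
    have hdec : ∑ n ∈ Finset.range N, eC (wdf g α (L + 1) j n - β * n) =
        (∑ r ∈ Finset.range g, eC (α j r - β * r)) *
          (∑ m ∈ Finset.range q, eC (wdf g α L (j + 1) m - (β * g) * m)) +
        ∑ i ∈ Finset.range s, eC (wdf g α (L + 1) j (q * g + i) - β * (q * g + i : ℕ)) := by
      rw [hNqs, Finset.sum_range_add, sum_split hg0 α L j β q]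
    set c := ∑ r ∈ Finset.range g, eC (α j r - β * r) with hc
    have htail : ‖∑ i ∈ Finset.range s,
        eC (wdf g α (L + 1) j (q * g + i) - β * (q * g + i : ℕ))‖ ≤ (s : ℝ) := by
      calc ‖∑ i ∈ Finset.range s, eC (wdf g α (L + 1) j (q * g + i) - β * (q * g + i : ℕ))‖
          ≤ ∑ i ∈ Finset.range s, ‖eC (wdf g α (L + 1) j (q * g + i) - β * (q * g + i : ℕ))‖ :=
            norm_sum_le _ _
        _ = (s : ℝ) := by simp [abs_eC]
    have hstep : ‖∑ n ∈ Finset.range N, eC (wdf g α (L + 1) j n - β * n)‖ ≤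
        ‖c‖ * ‖∑ m ∈ Finset.range q, eC (wdf g α L (j + 1) m - (β * g) * m)‖
          + (s : ℝ) := by
      rw [hdec]
      refine le_trans (norm_add_le _ _) ?_
      rw [norm_mul]
      exact add_le_add le_rfl htail
    -- rewrite the RHS
    rw [Finset.sum_range_succ']
    have h0 : (eps g N 0 : ℝ) *
        ‖∑ n ∈ Finset.range (g ^ 0), eC (wdf g α 0 j n - β * n)‖ = (s : ℝ) := by
      simp [eps, wdf, abs_eC, hs]
    rw [h0]
    have hterm : ∀ lam ∈ Finset.range (L + 1), (eps g N (lam + 1) : ℝ) *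
        ‖∑ n ∈ Finset.range (g ^ (lam + 1)), eC (wdf g α (lam + 1) j n - β * n)‖ =
        (eps g q lam : ℝ) * (‖c‖ *
          ‖∑ m ∈ Finset.range (g ^ lam), eC (wdf g α lam (j + 1) m - (β * g) * m)‖) := by
      intro lam _
      have he : eps g N (lam + 1) = eps g q lam := by
        unfold eps
        rw [pow_succ', ← Nat.div_div_eq_div_mul, hq]
      rw [he, pow_succ g lam, sum_split hg0 α lam j β (g ^ lam), norm_mul]
    rw [Finset.sum_congr rfl hterm]
    refine le_trans hstep ?_
    have := ih (j + 1) (β * g) q hqL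
    have habs : 0 ≤ ‖c‖ := norm_nonneg c
    calc ‖c‖ * ‖∑ m ∈ Finset.range q, eC (wdf g α L (j + 1) m - (β * g) * m)‖ + (s : ℝ)
        ≤ ‖c‖ * (∑ lam ∈ Finset.range (L + 1), (eps g q lam : ℝ) *
            ‖∑ n ∈ Finset.range (g ^ lam), eC (wdf g α lam (j + 1) n - (β * g) * n)‖) + (s : ℝ) := by
          gcongr
      _ = (∑ lam ∈ Finset.range (L + 1), (eps g q lam : ℝ) * (‖c‖ *
            ‖∑ n ∈ Finset.range (g ^ lam), eC (wdf g α lam (j + 1) n - (β * g) * n)‖)) + (s : ℝ) := by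
          rw [Finset.mul_sum]; congr 1; refine Finset.sum_congr rfl fun lam _ => by ring

theorem sum_cleanup (g : ℕ) (hg : 2 ≤ g) (α : ℕ → ℕ → ℝ) (L j : ℕ) (x : ℝ) (β : ℝ)
    (hx : 1 ≤ x) (hxL : x ≤ (g : ℝ) ^ L) :
    ‖∑ n ∈ Finset.range ⌈x⌉₊, eC (wdf g α L j n - β * n)‖ ≤
      (g - 1 : ℝ) *
        ∑ lam ∈ Finset.range (⌊Real.log (⌈x⌉₊ : ℝ) / Real.log g⌋₊ + 1),
          ‖∑ n ∈ Finset.range (g ^ lam), eC (wdf g α lam j n - β * n)‖ := by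
  have hg0 : 0 < g := by omega
  set N := ⌈x⌉₊ with hNdef
  have hN1 : 1 ≤ N := Nat.one_le_ceil_iff.mpr (by linarith)
  have hNL : N ≤ g ^ L := by
    apply Nat.ceil_le.mpr
    calc x ≤ (g : ℝ) ^ L := hxL
      _ = ((g ^ L : ℕ) : ℝ) := by push_cast; ring
  set K := ⌊Real.log (N : ℝ) / Real.log g⌋₊ with hK
  have hlogg : 0 < Real.log g := Real.log_pos (by exact_mod_cast by omega : (1 : ℝ) < g)
  -- digits vanish beyond K
  have heps0 : ∀ lam, K < lam → eps g N lam = 0 := by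
    intro lam hlam
    have hNlt : N < g ^ lam := by
      by_contra h
      push_neg at h
      have h1 : (g : ℝ) ^ lam ≤ (N : ℝ) := by exact_mod_cast h
      have h2 : Real.log ((g : ℝ) ^ lam) ≤ Real.log N :=
        Real.log_le_log (by positivity) h1
      rw [Real.log_pow] at h2
      have h3 : (lam : ℝ) ≤ Real.log N / Real.log g := by
        rw [le_div_iff₀ hlogg]; exact h2
      have : lam ≤ K := Nat.le_floor h3
      omega
    simp [eps, Nat.div_eq_of_lt hNlt]
  set T : ℕ → ℝ := fun lam =>
    ‖∑ n ∈ Finset.range (g ^ lam), eC (wdf g α lam j n - β * n)‖ with hT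
  have hTnn : ∀ lam, 0 ≤ T lam := fun lam => norm_nonneg _
  refine le_trans (main_bound hg α L j β N hNL) ?_
  have hsub : ∑ lam ∈ Finset.range (L + 1), (eps g N lam : ℝ) * T lam =
      ∑ lam ∈ Finset.range (L + 1) ∩ Finset.range (K + 1), (eps g N lam : ℝ) * T lam := by
    refine (Finset.sum_subset Finset.inter_subset_left ?_).symm
    intro lam hlamA hlamB
    have : K < lam := by
      simp only [Finset.mem_inter, Finset.mem_range] at hlamA hlamB
      omega
    rw [heps0 lam this]
    simp
  rw [hsub]
  calc ∑ lam ∈ Finset.range (L + 1) ∩ Finset.range (K + 1), (eps g N lam : ℝ) * T lam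
      ≤ ∑ lam ∈ Finset.range (L + 1) ∩ Finset.range (K + 1), ((g : ℝ) - 1) * T lam := by
        refine Finset.sum_le_sum fun lam _ => ?_
        have h1 : eps g N lam < g := Nat.mod_lt _ hg0
        have h2 : (eps g N lam : ℝ) ≤ (g : ℝ) - 1 := by
          have : (eps g N lam : ℝ) + 1 ≤ (g : ℝ) := by exact_mod_cast h1
          linarith
        exact mul_le_mul_of_nonneg_right h2 (hTnn lam)
    _ ≤ ∑ lam ∈ Finset.range (K + 1), ((g : ℝ) - 1) * T lam := by
        refine Finset.sum_le_sum_of_subset_of_nonneg Finset.inter_subset_right ?_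
        intro lam _ _
        have : (0 : ℝ) ≤ (g : ℝ) - 1 := by
          have : (1 : ℝ) ≤ g := by exact_mod_cast by omega
          linarith
        exact mul_nonneg this (hTnn lam)
    _ = ((g : ℝ) - 1) * ∑ lam ∈ Finset.range (K + 1), T lam := by rw [Finset.mul_sum]
end

section
/- For every g ∈ ℤ with g ≥ 2, the exponent η_g := max(1/2 − log(3/2)/(4 log g − 2 log 2), 1/2 + log(1−Θ_g)/(4 log g)) satisfies 0.2075187 < η_g < 1/2 − 1/(4g³ log g), given that 0 < Θ_g ≤ (1−1/g){1 − (1 − 2/(g²(g−1)))^{1/2}} holds with Θ_g > 1/g³. -/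
lemma big_pow : (3:ℕ)^15601 < 2^24727 := by decide +kernel

lemma log32_lt : Real.log (3/2) < 9126/15601 * Real.log 2 := by
  have h2 : (0:ℝ) < 2 := by norm_num
  have hpow : ((3:ℝ)/2)^15601 < 2^9126 := by
    rw [div_pow, div_lt_iff₀ (by positivity)]
    rw [← pow_add]
    exact_mod_cast big_pow
  have := Real.log_lt_log (by positivity) hpow
  rw [Real.log_pow, Real.log_pow] at this
  push_cast at this
  linarith

lemma log32_gt : (2:ℝ)/5 < Real.log (3/2) := by
  rw [show (2:ℝ)/5 = 2/5 from rfl]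
  have h : Real.exp (2/5) < 3/2 := by
    have he2 : Real.exp 2 < 7.3890561 := by
      have h1 := Real.exp_one_lt_d9
      calc Real.exp 2 = Real.exp 1 * Real.exp 1 := by
            rw [← Real.exp_add]; norm_num
        _ < 2.7182818286 * 2.7182818286 := by
            nlinarith [Real.exp_pos 1]
        _ < 7.3890561 := by norm_num
    have hpow : Real.exp (2/5) ^ 5 < (3/2:ℝ)^5 := by
      rw [← Real.exp_nat_mul]
      norm_num
      linarith [he2]
    exact lt_of_pow_lt_pow_left₀ 5 (by norm_num) hpow
  have := (Real.lt_log_iff_exp_lt (by norm_num : (0:ℝ) < 3/2)).mpr h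
  linarith

theorem eta_bound (g : ℕ) (hg : 2 ≤ g) (Θ : ℝ) (hΘ1 : 1 / (g : ℝ) ^ 3 < Θ) (hΘ2 : Θ < 1) :
    0.2075187 < max (1 / 2 - Real.log (3 / 2) / (4 * Real.log g - 2 * Real.log 2))
        (1 / 2 + Real.log (1 - Θ) / (4 * Real.log g)) ∧
      max (1 / 2 - Real.log (3 / 2) / (4 * Real.log g - 2 * Real.log 2))
        (1 / 2 + Real.log (1 - Θ) / (4 * Real.log g)) <
        1 / 2 - 1 / (4 * (g : ℝ) ^ 3 * Real.log g) := by
  have hg2 : (2:ℝ) ≤ (g:ℝ) := by exact_mod_cast hg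
  have hg1 : (1:ℝ) < (g:ℝ) := by linarith
  have hL0 : 0 < Real.log g := Real.log_pos hg1
  have hlog2 : 0 < Real.log 2 := Real.log_pos (by norm_num)
  have hL : Real.log 2 ≤ Real.log g := Real.log_le_log (by norm_num) hg2
  have hg3 : (8:ℝ) ≤ (g:ℝ)^3 := by nlinarith [pow_le_pow_left₀ (by norm_num : (0:ℝ) ≤ 2) hg2 3]
  have hg30 : (0:ℝ) < (g:ℝ)^3 := by linarith
  have h32pos : 0 < Real.log (3/2) := Real.log_pos (by norm_num)
  set L := Real.log g with hLdef
  have hD0 : (0:ℝ) < 4 * L - 2 * Real.log 2 := by linarith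
  constructor
  · -- lower bound via the first term of the max
    have key : Real.log (3/2) / (4 * L - 2 * Real.log 2) < 0.2924813 := by
      calc Real.log (3/2) / (4 * L - 2 * Real.log 2)
          ≤ Real.log (3/2) / (2 * Real.log 2) := by
            apply div_le_div_of_nonneg_left h32pos.le (by linarith) (by linarith)
        _ < 0.2924813 := by
            rw [div_lt_iff₀ (by linarith)]
            nlinarith [log32_lt, hlog2]
    have hA : (0.2075187:ℝ) < 1/2 - Real.log (3/2) / (4 * L - 2 * Real.log 2) := by
      norm_num at key ⊢
      linarith
    exact lt_of_lt_of_le hA (le_max_left _ _)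
  · -- upper bound: both branches
    apply max_lt
    · -- A < 1/2 - 1/(4 g³ L)
      have h1 : 1 / (4 * (g:ℝ)^3 * L) < Real.log (3/2) / (4 * L - 2 * Real.log 2) := by
        rw [div_lt_div_iff₀ (by positivity) hD0]
        have h2 : (4:ℝ) * (g:ℝ)^3 * L * (2/5) ≥ (64/5) * L := by nlinarith
        nlinarith [log32_gt, mul_pos (mul_pos (by linarith : (0:ℝ) < 4 * (g:ℝ)^3) hL0) h32pos,
          mul_lt_mul_of_pos_left log32_gt (by positivity : (0:ℝ) < 4 * (g:ℝ)^3 * L)]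
      linarith
    · -- B < 1/2 - 1/(4 g³ L)
      have h1Θ : 0 < 1 - Θ := by linarith
      have hstep : 1 - Θ < 1 - 1/(g:ℝ)^3 := by linarith
      have hlog : Real.log (1 - Θ) < -(1/(g:ℝ)^3) := by
        have := Real.log_lt_log h1Θ hstep
        have h2 := Real.log_le_sub_one_of_pos (by
          have : 1/(g:ℝ)^3 ≤ 1/8 := by
            apply div_le_div_of_nonneg_left (by norm_num) (by norm_num) hg3
          linarith : (0:ℝ) < 1 - 1/(g:ℝ)^3)
        linarith
      have h4L : (0:ℝ) < 4 * L := by linarith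
      have hdiv : Real.log (1 - Θ) / (4 * L) < -(1/(g:ℝ)^3) / (4 * L) :=
        (div_lt_div_iff_of_pos_right h4L).mpr hlog
      have heq : -(1/(g:ℝ)^3) / (4 * L) = -(1 / (4 * (g:ℝ)^3 * L)) := by
        field_simp
      rw [heq] at hdiv
      linarith
end

section
/- Let g ≥ 2 and α ∈ ℝ \ ℤ. Set i₀ := ⌊log(g/((g+1)‖α‖)) / log g⌋. Then ‖g^{i₀} α‖ ≥ 1/(g+1), where ‖x‖ is the distance from x to the nearest integer. -/
/-- Distance from `x` to the nearest integer. -/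
noncomputable def nint (x : ℝ) : ℝ := |x - round x|

lemma nint_nonneg (x : ℝ) : 0 ≤ nint x := abs_nonneg _

lemma nint_le_half (x : ℝ) : nint x ≤ 1 / 2 := abs_sub_round x

lemma nint_add_int (x : ℝ) (m : ℤ) : nint (x + m) = nint x := by
  unfold nint
  rw [round_add_intCast]
  push_cast
  ring_nf

lemma nint_le (x : ℝ) (m : ℤ) : nint x ≤ |x - m| := round_le x m

lemma min_le_nint (t : ℝ) : min |t| (1 - |t|) ≤ nint t := by
  unfold nint
  rcases eq_or_ne (round t) 0 with h | h
  · rw [h]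
    simpa using min_le_left |t| (1 - |t|)
  · have h1 : (1 : ℝ) ≤ |(round t : ℝ)| := by
      have := Int.one_le_abs (Int.natAbs_pos.mp (Int.natAbs_pos.mpr h))
      calc (1:ℝ) = ((1:ℤ):ℝ) := by norm_num
        _ ≤ ((|round t| : ℤ) : ℝ) := by exact_mod_cast this
        _ = |(round t : ℝ)| := by push_cast; ring
    have : |(round t : ℝ)| - |t| ≤ |t - round t| := by
      have := abs_sub_abs_le_abs_sub (round t : ℝ) t
      rw [abs_sub_comm] at this
      linarith
    calc min |t| (1 - |t|) ≤ 1 - |t| := min_le_right _ _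
      _ ≤ |(round t : ℝ)| - |t| := by linarith
      _ ≤ |t - round t| := this

/-- Key dichotomy: if `nint y ≤ 1/(g+1)` then multiplying by `g` either scales the distance
exactly by `g`, or the distance jumps above `1/(g+1)` (and `g * nint y > 1/2`). -/
lemma nint_mul_dichotomy (g : ℕ) (hg : 2 ≤ g) (y : ℝ)
    (hy : nint y ≤ 1 / ((g : ℝ) + 1)) :
    nint ((g : ℝ) * y) = g * nint y ∨
      (1 / 2 < (g : ℝ) * nint y ∧ 1 / ((g : ℝ) + 1) ≤ nint ((g : ℝ) * y)) := by
  have hg1 : (1 : ℝ) ≤ g := by exact_mod_cast Nat.one_le_of_lt hg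
  have hgpos : (0 : ℝ) < g := by linarith
  set e : ℝ := y - round y with he
  have hkey : nint ((g : ℝ) * y) = nint ((g : ℝ) * e) := by
    have : (g : ℝ) * y = (g : ℝ) * e + ((g * round y : ℤ) : ℝ) := by
      push_cast; ring
    rw [this, nint_add_int]
  have habs : |(g : ℝ) * e| = g * nint y := by
    rw [abs_mul, abs_of_pos hgpos]; rfl
  have hbound : |(g : ℝ) * e| ≤ (g : ℝ) / ((g : ℝ) + 1) := by
    rw [habs]
    calc (g : ℝ) * nint y ≤ (g : ℝ) * (1 / ((g : ℝ) + 1)) := by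
          exact mul_le_mul_of_nonneg_left hy (le_of_lt hgpos)
      _ = (g : ℝ) / ((g : ℝ) + 1) := by ring
  rcases le_or_gt |(g : ℝ) * e| (1 / 2) with hcase | hcase
  · left
    rw [hkey, ← habs]
    have hle : nint ((g : ℝ) * e) ≤ |(g : ℝ) * e| := by
      have := nint_le ((g : ℝ) * e) 0
      simpa using this
    have hge : |(g : ℝ) * e| ≤ nint ((g : ℝ) * e) := by
      have := min_le_nint ((g : ℝ) * e)
      have hm : min |(g : ℝ) * e| (1 - |(g : ℝ) * e|) = |(g : ℝ) * e| := by
        apply min_eq_left; linarith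
      rwa [hm] at this
    linarith
  · right
    constructor
    · rwa [habs] at hcase
    · rw [hkey]
      have := min_le_nint ((g : ℝ) * e)
      have hm : min |(g : ℝ) * e| (1 - |(g : ℝ) * e|) = 1 - |(g : ℝ) * e| := by
        apply min_eq_right; linarith
      rw [hm] at this
      have h1 : 1 - (g : ℝ) / ((g : ℝ) + 1) = 1 / ((g : ℝ) + 1) := by
        field_simp; ring
      linarith

theorem geometric_progression_mod1 (g : ℕ) (hg : 2 ≤ g) (α : ℝ) (hα : ∀ n : ℤ, α ≠ n) :
    1 / ((g : ℝ) + 1) ≤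
      nint ((g : ℝ) ^ (⌊Real.log ((g : ℝ) / (((g : ℝ) + 1) * nint α)) / Real.log g⌋₊) * α) := by
  have hg1 : (1 : ℝ) < g := by exact_mod_cast hg
  have hgpos : (0 : ℝ) < g := by linarith
  set δ : ℝ := nint α with hδdef
  have hδpos : 0 < δ := by
    rw [hδdef]
    unfold nint
    rw [abs_pos, sub_ne_zero]
    exact hα (round α)
  have hδhalf : δ ≤ 1 / 2 := nint_le_half α
  set X : ℝ := (g : ℝ) / (((g : ℝ) + 1) * δ) with hXdef
  have hXpos : 0 < X := by
    apply div_pos hgpos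
    positivity
  have hX1 : 1 < X := by
    rw [hXdef, lt_div_iff₀ (by positivity)]
    nlinarith
  have hq : Real.log X / Real.log g = Real.logb g X := rfl
  set N : ℕ := ⌊Real.logb g X⌋₊ with hNdef
  -- `g ^ N ≤ X` and `X / g < g ^ N`
  have hrpowX : (g : ℝ) ^ (Real.logb g X) = X :=
    Real.rpow_logb hgpos (by linarith) hXpos
  have hlogb_nonneg : 0 ≤ Real.logb g X := Real.logb_nonneg hg1 (le_of_lt hX1)
  have hupper : ((g : ℝ) ^ N) ≤ X := by
    have h1 : ((g : ℝ) ^ N) = (g : ℝ) ^ ((N : ℝ)) := by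
      rw [Real.rpow_natCast]
    rw [h1, ← hrpowX]
    exact Real.rpow_le_rpow_of_exponent_le (le_of_lt hg1) (Nat.floor_le hlogb_nonneg)
  have hlower : X / g < (g : ℝ) ^ N := by
    have h1 : ((g : ℝ) ^ N) = (g : ℝ) ^ ((N : ℝ)) := by
      rw [Real.rpow_natCast]
    have h2 : X / g = (g : ℝ) ^ (Real.logb g X - 1) := by
      rw [Real.rpow_sub hgpos, hrpowX, Real.rpow_one]
    rw [h1, h2]
    apply Real.rpow_lt_rpow_of_exponent_lt hg1
    have := Nat.lt_floor_add_one (Real.logb g X)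
    linarith
  -- hence `g ^ N * δ ≤ g / (g+1)` and `1 / (g+1) < g ^ N * δ`
  have hprod_upper : ((g : ℝ) ^ N) * δ ≤ (g : ℝ) / ((g : ℝ) + 1) := by
    have := mul_le_mul_of_nonneg_right hupper (le_of_lt hδpos)
    rw [hXdef] at this
    calc ((g : ℝ) ^ N) * δ ≤ (g : ℝ) / (((g : ℝ) + 1) * δ) * δ := this
      _ = (g : ℝ) / ((g : ℝ) + 1) := by field_simp
  have hprod_lower : 1 / ((g : ℝ) + 1) < ((g : ℝ) ^ N) * δ := by
    have := mul_lt_mul_of_pos_right hlower hδpos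
    rw [hXdef] at this
    have heq : (g : ℝ) / (((g : ℝ) + 1) * δ) / (g : ℝ) * δ = 1 / ((g : ℝ) + 1) := by
      field_simp
    linarith [heq ▸ this]
  -- main argument by contradiction
  rw [hq, ← hNdef]
  by_contra hcon
  push_neg at hcon
  -- claim: for all i ≤ N, nint (g^i * α) = g^i * δ
  have claim : ∀ i : ℕ, i ≤ N → nint (((g : ℝ) ^ i) * α) = ((g : ℝ) ^ i) * δ := by
    intro i
    induction i with
    | zero => intro _; simp [hδdef]
    | succ i ih =>
      intro hiN
      have hi_lt : i < N := Nat.lt_of_succ_le hiN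
      have hIH := ih (le_of_lt hi_lt)
      -- bound: g^i * δ ≤ 1/(g+1) since i ≤ N - 1
      have hbound : ((g : ℝ) ^ i) * δ ≤ 1 / ((g : ℝ) + 1) := by
        have hpow : ((g : ℝ) ^ i) * (g : ℝ) ≤ (g : ℝ) ^ N := by
          have : ((g : ℝ) ^ (i + 1)) ≤ (g : ℝ) ^ N :=
            pow_le_pow_right₀ (le_of_lt hg1) hiN
          rwa [pow_succ] at this
        have h1 : ((g : ℝ) ^ i) * (g : ℝ) * δ ≤ ((g : ℝ) ^ N) * δ :=
          mul_le_mul_of_nonneg_right hpow (le_of_lt hδpos)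
        have h2 : ((g : ℝ) ^ i) * (g : ℝ) * δ ≤ (g : ℝ) / ((g : ℝ) + 1) :=
          le_trans h1 hprod_upper
        have h3 : ((g : ℝ) ^ i) * δ ≤ (g : ℝ) / ((g : ℝ) + 1) / (g : ℝ) := by
          rw [le_div_iff₀ hgpos]
          calc ((g : ℝ) ^ i) * δ * (g : ℝ) = ((g : ℝ) ^ i) * (g : ℝ) * δ := by ring
            _ ≤ (g : ℝ) / ((g : ℝ) + 1) := h2
        have h4 : (g : ℝ) / ((g : ℝ) + 1) / (g : ℝ) = 1 / ((g : ℝ) + 1) := by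
          field_simp
        linarith
      have hy : nint (((g : ℝ) ^ i) * α) ≤ 1 / ((g : ℝ) + 1) := by
        rw [hIH]; exact hbound
      rcases nint_mul_dichotomy g hg (((g : ℝ) ^ i) * α) hy with hcase | ⟨hhalf, hjump⟩
      · have : (g : ℝ) * (((g : ℝ) ^ i) * α) = ((g : ℝ) ^ (i + 1)) * α := by ring
        rw [this] at hcase
        rw [hcase, hIH, pow_succ]
        ring
      · -- jump case: then g^(i+1) δ > 1/2 forces i+1 = N, contradicting hcon
        exfalso
        rw [hIH] at hhalf
        have hval : (g : ℝ) * (((g : ℝ) ^ i) * δ) = ((g : ℝ) ^ (i + 1)) * δ := by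
          rw [pow_succ]; ring
        rw [hval] at hhalf
        rcases Nat.lt_or_ge (i + 1) N with hlt | hge
        · -- then g^(i+1) δ ≤ 1/(g+1) ≤ 1/2, contradiction with hhalf
          have hb2 : ((g : ℝ) ^ (i + 1)) * δ ≤ 1 / ((g : ℝ) + 1) := by
            have hpow : ((g : ℝ) ^ (i + 1)) * (g : ℝ) ≤ (g : ℝ) ^ N := by
              have : ((g : ℝ) ^ (i + 2)) ≤ (g : ℝ) ^ N :=
                pow_le_pow_right₀ (le_of_lt hg1) hlt
              rwa [pow_succ] at this
            have h1 : ((g : ℝ) ^ (i + 1)) * (g : ℝ) * δ ≤ ((g : ℝ) ^ N) * δ :=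
              mul_le_mul_of_nonneg_right hpow (le_of_lt hδpos)
            have h2 : ((g : ℝ) ^ (i + 1)) * (g : ℝ) * δ ≤ (g : ℝ) / ((g : ℝ) + 1) :=
              le_trans h1 hprod_upper
            have h3 : ((g : ℝ) ^ (i + 1)) * δ ≤ (g : ℝ) / ((g : ℝ) + 1) / (g : ℝ) := by
              rw [le_div_iff₀ hgpos]
              calc ((g : ℝ) ^ (i + 1)) * δ * (g : ℝ) = ((g : ℝ) ^ (i + 1)) * (g : ℝ) * δ := by
                    ring
                _ ≤ (g : ℝ) / ((g : ℝ) + 1) := h2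
            have h4 : (g : ℝ) / ((g : ℝ) + 1) / (g : ℝ) = 1 / ((g : ℝ) + 1) := by
              field_simp
            linarith
          have : 1 / ((g : ℝ) + 1) ≤ 1 / 2 := by
            rw [div_le_div_iff₀ (by linarith) (by norm_num)]
            linarith
          linarith
        · -- i + 1 = N: contradiction with hcon
          have hN : i + 1 = N := le_antisymm hiN hge
          have : (g : ℝ) * (((g : ℝ) ^ i) * α) = ((g : ℝ) ^ N) * α := by
            rw [← hN, pow_succ]; ring
          rw [this] at hjump
          exact absurd hjump (not_le.mpr hcon)
  have hfinal := claim N le_rfl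
  rw [hfinal] at hcon
  linarith
end
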